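/- Let C ⊆ {0,1}^m be a linear code (closed under addition mod 2). Fix integers r, w ≥ 0 with r + w ≤ m. Let A(w) = |{c ∈ C : wt(c) ≤ w}| be the number of codewords of Hamming weight at most w. Then |∪_{c∈C} B(c, r)| ≤ (1/A(w)) · Σ_{c∈C} |B(c, r+w)|. -/

import Mathlib

/-- For a linear code `C ⊆ {0,1}^m` and `r + w ≤ m`, with
`A(w)` the number of codewords of weight at most `w`, the size of the union of
radius-`r` balls around codewords is at most `(1/A(w)) Σ_{c∈C} |B(c, r+w)|`. -/
theorem stmt_1 (m r w : ℕ) (hrw : r + w ≤ m) (C : Finset (Fin m → ZMod 2))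
    (h0 : (0 : Fin m → ZMod 2) ∈ C)
    (hadd : ∀ x ∈ C, ∀ y ∈ C, x + y ∈ C)
    (A : ℕ) (hA : A = (C.filter fun c => hammingNorm c ≤ w).card) :
    ((C.biUnion fun c =>
        Finset.univ.filter fun y => hammingDist c y ≤ r).card : ℝ)
      ≤ (1 / A) * ∑ c ∈ C,
          ((Finset.univ.filter fun y => hammingDist c y ≤ r + w).card : ℝ) := by
  classical
  set U := C.biUnion fun c => Finset.univ.filter fun y => hammingDist c y ≤ r with hU
  have hApos : 0 < A := by
    rw [hA]
    exact Finset.card_pos.mpr ⟨0, Finset.mem_filter.mpr ⟨h0, by simp⟩⟩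
  -- pointwise: each point of U lies in at least A big balls
  have point : ∀ y ∈ U, A ≤ (C.filter fun c => hammingDist c y ≤ r + w).card := by
    intro y hy
    rw [hU, Finset.mem_biUnion] at hy
    obtain ⟨c', hc'C, hc'⟩ := hy
    rw [Finset.mem_filter] at hc'
    rw [hA]
    apply Finset.card_le_card_of_injOn (fun z => c' + z)
    · intro z hz
      rw [Finset.mem_coe, Finset.mem_filter] at hz ⊢
      refine ⟨hadd c' hc'C z hz.1, ?_⟩
      calc hammingDist (c' + z) y ≤ hammingDist (c' + z) c' + hammingDist c' y :=
            hammingDist_triangle _ _ _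
        _ ≤ w + r := by
            have : hammingDist (c' + z) c' = hammingNorm z := by
              rw [hammingDist_eq_hammingNorm]
              simp
              congr 1; funext i; exact ZMod.neg_eq_self_mod_two _
            rw [this]
            exact Nat.add_le_add hz.2 hc'.2
        _ = r + w := Nat.add_comm _ _
    · intro a _ b _ h
      exact add_left_cancel h
  -- double counting
  have key : A * U.card ≤ ∑ c ∈ C, (Finset.univ.filter fun y => hammingDist c y ≤ r + w).card := by
    have hswap : ∑ c ∈ C, (Finset.univ.filter fun y => hammingDist c y ≤ r + w).card
        = ∑ y : Fin m → ZMod 2, (C.filter fun c => hammingDist c y ≤ r + w).card := by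
      simp_rw [Finset.card_filter]
      rw [Finset.sum_comm]
    rw [hswap]
    calc A * U.card = ∑ _y ∈ U, A := by rw [Finset.sum_const, smul_eq_mul, Nat.mul_comm]
      _ ≤ ∑ y ∈ U, (C.filter fun c => hammingDist c y ≤ r + w).card :=
          Finset.sum_le_sum point
      _ ≤ ∑ y : Fin m → ZMod 2, (C.filter fun c => hammingDist c y ≤ r + w).card :=
          Finset.sum_le_sum_of_subset (Finset.subset_univ _)
  have keyR : (A : ℝ) * U.card ≤ ∑ c ∈ C,
      ((Finset.univ.filter fun y => hammingDist c y ≤ r + w).card : ℝ) := by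
    exact_mod_cast key
  have hAR : (0 : ℝ) < A := by exact_mod_cast hApos
  rw [one_div, inv_mul_eq_div, le_div_iff₀ hAR, mul_comm]
  exact keyR
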